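/- Let A : Ω → B(H) be a pairwise linearly independent observable on a finite set Ω. Then A is minimal sufficient: for any Markov kernel q : Ω×Ω → ℝ (q ≥ 0, ∑_x q(x,y)=1), if q∗A = A then q(x,x') = δ_{x,x'} for all x, x' ∈ Ω. -/

import Mathlib

noncomputable section

open scoped BigOperators

local notation "⟪" x ", " y "⟫_ℂ" => @inner ℂ _ _ x y
local notation "⟪" x ", " y "⟫_ℝ" => @inner ℝ _ _ x y


variable {H : Type*} [NormedAddCommGroup H] [InnerProductSpace ℂ H] [CompleteSpace H]

/-- A Markov kernel from `Ω₂` to `Ω₁`: nonnegative entries, columns summing to 1. -/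
def IsMarkov {Ω₁ Ω₂ : Type*} [Fintype Ω₁] (p : Ω₁ → Ω₂ → ℝ) : Prop :=
  (∀ x y, 0 ≤ p x y) ∧ ∀ y, ∑ x, p x y = 1

/-- A finite-outcome observable (POVM): positive operators summing to the identity. -/
def IsObservable {Ω : Type*} [Fintype Ω] (A : Ω → H →L[ℂ] H) : Prop :=
  (∀ x, (A x).IsPositive) ∧ ∑ x, A x = 1

/-- Post-processing of `A` by the kernel `p`. -/
def pproc {Ω₁ Ω₂ : Type*} [Fintype Ω₂] (p : Ω₁ → Ω₂ → ℝ) (A : Ω₂ → H →L[ℂ] H) :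
    Ω₁ → H →L[ℂ] H := fun x => ∑ y, (p x y : ℂ) • A y

/-- `A ⪯ B` : `A` is a post-processing of `B`. -/
def PP {Ω₁ Ω₂ : Type*} [Fintype Ω₁] [Fintype Ω₂] (A : Ω₁ → H →L[ℂ] H)
    (B : Ω₂ → H →L[ℂ] H) : Prop := ∃ p, IsMarkov p ∧ A = pproc p B

/-- `G` is a joint observable of the observables `A ℓ`. -/
def IsJoint {n : ℕ} {Ω : Fin n → Type*} [∀ ℓ, Fintype (Ω ℓ)] [∀ ℓ, DecidableEq (Ω ℓ)]
    (A : ∀ ℓ, Ω ℓ → H →L[ℂ] H) (G : (∀ ℓ, Ω ℓ) → H →L[ℂ] H) : Prop :=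
  IsObservable G ∧ ∀ ℓ xℓ, (∑ x : ∀ ℓ, Ω ℓ, if x ℓ = xℓ then G x else 0) = A ℓ xℓ

/-- For a nonzero positive operator there is a vector with strictly positive expectation. -/
lemma exists_inner_re_pos (T : H →L[ℂ] H) (hT : T.IsPositive) (h0 : T ≠ 0) :
    ∃ χ : H, 0 < Complex.re (⟪T χ, χ⟫_ℂ) := by
  by_contra hc
  push_neg at hc
  apply h0
  have hsa : ContinuousLinearMap.adjoint T = T :=
    (ContinuousLinearMap.isSelfAdjoint_iff').mp hT.isSelfAdjoint
  have hreal : ∀ x : H, (⟪T x, x⟫_ℂ) = 0 := by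
    intro x
    have h1 : Complex.re (⟪T x, x⟫_ℂ) = 0 :=
      le_antisymm (hc x) (hT.re_inner_nonneg_left x)
    have h2 : (starRingEnd ℂ) (⟪T x, x⟫_ℂ) = ⟪T x, x⟫_ℂ := by
      calc (starRingEnd ℂ) (⟪T x, x⟫_ℂ) = ⟪x, T x⟫_ℂ := inner_conj_symm x (T x)
        _ = ⟪ContinuousLinearMap.adjoint T x, x⟫_ℂ :=
            (ContinuousLinearMap.adjoint_inner_left T x x).symm
        _ = ⟪T x, x⟫_ℂ := by rw [hsa]
    have h3 := Complex.conj_eq_iff_re.mp h2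
    rw [← h3, h1]
    simp
  ext x
  have h4 := (inner_map_self_eq_zero (T : H →ₗ[ℂ] H)).mp (by intro x; simpa using hreal x)
  simpa using LinearMap.congr_fun h4 x

set_option maxHeartbeats 1000000 in
/-- A pairwise linearly independent observable is minimal sufficient: any Markov kernel
fixing it is the identity kernel. -/
theorem pairwise_linearIndependent_minimal_sufficient {Ω : Type*} [Fintype Ω]
    [DecidableEq Ω]
    (A : Ω → H →L[ℂ] H) (hA : IsObservable A)
    (hpli : ∀ x1 x2 : Ω, x1 ≠ x2 → LinearIndependent ℂ ![A x1, A x2])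
    (q : Ω → Ω → ℝ) (hq : IsMarkov q) (h : pproc q A = A) :
    ∀ x x' : Ω, q x x' = if x = x' then 1 else 0 := by
  classical
  obtain ⟨hnn, hcol⟩ := hq
  have hdiag_le : ∀ x, q x x ≤ 1 := by
    intro x
    calc q x x ≤ ∑ t, q t x :=
          Finset.single_le_sum (fun t _ => hnn t x) (Finset.mem_univ x)
      _ = 1 := hcol x
  suffices hdiag : ∀ x, q x x = 1 by
    intro x x'
    by_cases hxe : x = x'
    · subst hxe; simp [hdiag x]
    · simp only [hxe, if_false]
      have h1 : q x' x' + ∑ t ∈ Finset.univ.erase x', q t x' = 1 := by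
        have := Finset.add_sum_erase Finset.univ (fun t => q t x') (Finset.mem_univ x')
        rw [this]; exact hcol x'
      have h2 : ∑ t ∈ Finset.univ.erase x', q t x' = 0 := by
        rw [hdiag x'] at h1; linarith
      have h3 := (Finset.sum_eq_zero_iff_of_nonneg (fun t _ => hnn t x')).mp h2
      exact h3 x (Finset.mem_erase.mpr ⟨hxe, Finset.mem_univ x⟩)
  by_contra hcon
  push_neg at hcon
  obtain ⟨x₀, hx₀⟩ := hcon
  have hx₀B : q x₀ x₀ < 1 := lt_of_le_of_ne (hdiag_le x₀) hx₀
  set B : Finset Ω := Finset.univ.filter (fun x => q x x < 1) with hB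
  have hx₀mem : x₀ ∈ B := by simp [hB, hx₀B]
  -- there are at least two outcomes
  have hnontriv : ∃ t : Ω, t ≠ x₀ := by
    by_contra hone
    push_neg at hone
    have huniv : (Finset.univ : Finset Ω) = {x₀} := by
      ext t; simp [hone t]
    have := hcol x₀
    rw [huniv, Finset.sum_singleton] at this
    linarith
  -- all effects are nonzero
  have hAne : ∀ y, A y ≠ 0 := by
    intro y
    obtain ⟨t, ht⟩ := hnontriv
    by_cases hyx : y = x₀
    · have hyt : y ≠ t := by rw [hyx]; exact fun he => ht he.symm
      have := (hpli y t hyt).ne_zero 0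
      simpa using this
    · have := (hpli y x₀ hyx).ne_zero 0
      simpa using this
  -- entries pointing out of B vanish
  have hq0 : ∀ x y, y ∉ B → x ≠ y → q x y = 0 := by
    intro x y hyB hxy
    have hge : (1:ℝ) ≤ q y y := by
      have : ¬ q y y < 1 := by simpa [hB] using hyB
      linarith [not_lt.mp this]
    have h1 : q y y + ∑ t ∈ Finset.univ.erase y, q t y = 1 := by
      have := Finset.add_sum_erase Finset.univ (fun t => q t y) (Finset.mem_univ y)
      rw [this]; exact hcol y
    have h2 : q x y ≤ ∑ t ∈ Finset.univ.erase y, q t y :=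
      Finset.single_le_sum (fun t _ => hnn t y)
        (Finset.mem_erase.mpr ⟨hxy, Finset.mem_univ x⟩)
    have := hnn x y
    linarith
  -- the operator relation restricted to B
  have hopB : ∀ x ∈ B, ((1 - q x x : ℝ) : ℂ) • A x
      = ∑ y ∈ B.erase x, (q x y : ℂ) • A y := by
    intro x hxB
    have h0 : ∑ y, (q x y : ℂ) • A y = A x := congrFun h x
    have h1 : ∑ y ∈ B, (q x y : ℂ) • A y = A x := by
      rw [← h0]
      apply Finset.sum_subset (Finset.subset_univ B)
      intro y _ hyB
      have hxy : x ≠ y := fun he => hyB (he ▸ hxB)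
      rw [hq0 x y hyB hxy]
      simp
    have h2 : (q x x : ℂ) • A x + ∑ y ∈ B.erase x, (q x y : ℂ) • A y
        = ∑ y ∈ B, (q x y : ℂ) • A y :=
      Finset.add_sum_erase B (fun y => (q x y : ℂ) • A y) hxB
    have h3 : ((1 - q x x : ℝ) : ℂ) • A x = A x - (q x x : ℂ) • A x := by
      push_cast
      rw [sub_smul, one_smul]
    rw [h1] at h2
    have h4 : ∑ y ∈ B.erase x, (q x y : ℂ) • A y = A x - (q x x : ℂ) • A x :=
      eq_sub_of_add_eq' h2
    rw [h3, h4]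
  -- choose positive-expectation vectors
  have hψex : ∀ y : Ω, ∃ χ : H, 0 < Complex.re (⟪(A y) χ, χ⟫_ℂ) :=
    fun y => exists_inner_re_pos (A y) (hA.1 y) (hAne y)
  choose ψ hψ using hψex
  -- the strictly positive functional f
  set f : (H →L[ℂ] H) → ℝ := fun X => ∑ a, Complex.re (⟪X (ψ a), ψ a⟫_ℂ) with hf
  have hfpos : ∀ y, 0 < f (A y) := by
    intro y
    apply Finset.sum_pos'
    · intro a _
      exact (hA.1 y).re_inner_nonneg_left (ψ a)
    · exact ⟨y, Finset.mem_univ y, hψ y⟩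
  -- normalized effects
  set u : Ω → (H →L[ℂ] H) := fun x => ((f (A x))⁻¹ : ℂ) • A x with hu
  -- the normalized effects are pairwise distinct
  have hDne : ∀ a b : Ω, a ≠ b → u a - u b ≠ 0 := by
    intro a b hab hzero
    have h1 : ((f (A a))⁻¹ : ℂ) • A a = ((f (A b))⁻¹ : ℂ) • A b := by
      have := sub_eq_zero.mp hzero
      simpa [hu] using this
    have h2 : A a = ((f (A a) * (f (A b))⁻¹ : ℝ) : ℂ) • A b := by
      have hfa : ((f (A a) : ℝ) : ℂ) ≠ 0 := by
        exact_mod_cast ne_of_gt (hfpos a)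
      calc A a = ((f (A a) : ℝ) : ℂ) • (((f (A a))⁻¹ : ℂ) • A a) := by
            rw [smul_smul]
            norm_cast
            rw [mul_inv_cancel₀ (ne_of_gt (hfpos a))]
            simp
        _ = ((f (A a) : ℝ) : ℂ) • (((f (A b))⁻¹ : ℂ) • A b) := by rw [h1]
        _ = ((f (A a) * (f (A b))⁻¹ : ℝ) : ℂ) • A b := by
            rw [smul_smul]; norm_cast
    have hli2 : ∀ c : ℂ, c • A b ≠ A a := by
      have := (linearIndependent_fin2).mp (hpli a b hab)
      simpa using this.2
    exact hli2 _ h2.symm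
  -- choose separating vectors for pairs
  have hχex : ∀ a b : Ω, a ≠ b → ∃ χ0 : H, (⟪(u a - u b) χ0, χ0⟫_ℂ) ≠ 0 := by
    intro a b hab
    by_contra hcc
    push_neg at hcc
    apply hDne a b hab
    ext x
    have h4 := (inner_map_self_eq_zero ((u a - u b : H →L[ℂ] H) : H →ₗ[ℂ] H)).mp
      (by intro x; exact hcc x)
    simpa using LinearMap.congr_fun h4 x
  choose! χ hχ using hχex
  -- the Euclidean embedding
  set coord : (Ω × Ω × Fin 3) → (H →L[ℂ] H) → ℝ := fun p X =>
    if p.2.2 = 0 then Complex.re (⟪X (ψ p.1), ψ p.1⟫_ℂ)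
    else if p.2.2 = 1 then Complex.re (⟪X (χ p.1 p.2.1), χ p.1 p.2.1⟫_ℂ)
    else Complex.im (⟪X (χ p.1 p.2.1), χ p.1 p.2.1⟫_ℂ) with hcoord_def
  set le0 : EuclideanSpace ℝ (Ω × Ω × Fin 3) ≃ₗ[ℝ] ((Ω × Ω × Fin 3) → ℝ) :=
    WithLp.linearEquiv 2 ℝ _ with hle0
  set v : Ω → EuclideanSpace ℝ (Ω × Ω × Fin 3) :=
    fun x => le0.symm (fun p => coord p (u x)) with hv
  have hv_apply : ∀ x p, le0 (v x) p = coord p (u x) := by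
    intro x p
    rw [hv]
    simp
  -- linearity of coordinates over the relation
  have hkey : ∀ (s : Finset Ω) (c : Ω → ℝ) (χ0 : H),
      (⟪(∑ y ∈ s, (c y : ℂ) • A y) χ0, χ0⟫_ℂ) = ∑ y ∈ s, (c y : ℂ) * ⟪(A y) χ0, χ0⟫_ℂ := by
    intro s c χ0
    rw [ContinuousLinearMap.sum_apply, sum_inner]
    apply Finset.sum_congr rfl
    intro y _
    rw [ContinuousLinearMap.smul_apply, inner_smul_left, Complex.conj_ofReal]
  have hopC : ∀ x ∈ B, ∀ χ0 : H,
      ((1 - q x x : ℝ) : ℂ) * ⟪(A x) χ0, χ0⟫_ℂ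
        = ∑ y ∈ B.erase x, (q x y : ℂ) * ⟪(A y) χ0, χ0⟫_ℂ := by
    intro x hx χ0
    have h1 := congrArg (fun T : H →L[ℂ] H => (⟪T χ0, χ0⟫_ℂ)) (hopB x hx)
    rw [hkey] at h1
    rw [← h1, ContinuousLinearMap.smul_apply, inner_smul_left, Complex.conj_ofReal]
  -- coordinates of A satisfy the relation
  have hcoordA : ∀ x ∈ B, ∀ p : Ω × Ω × Fin 3,
      (1 - q x x) * coord p (A x) = ∑ y ∈ B.erase x, q x y * coord p (A y) := by
    intro x hx p
    by_cases h0 : p.2.2 = 0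
    · have h1 := congrArg Complex.re (hopC x hx (ψ p.1))
      simp only [Complex.re_ofReal_mul, Complex.re_sum] at h1
      simpa [hcoord_def, h0, Complex.re_ofReal_mul] using h1
    · by_cases h1' : p.2.2 = 1
      · have h1 := congrArg Complex.re (hopC x hx (χ p.1 p.2.1))
        simp only [Complex.re_ofReal_mul, Complex.re_sum] at h1
        simpa [hcoord_def, h0, h1', Complex.re_ofReal_mul] using h1
      · have h1 := congrArg Complex.im (hopC x hx (χ p.1 p.2.1))
        simp only [Complex.im_ofReal_mul, Complex.im_sum] at h1
        simpa [hcoord_def, h0, h1', Complex.im_ofReal_mul] using h1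
  -- coordinates of u versus A
  have hcoord_u : ∀ (p : Ω × Ω × Fin 3) (x : Ω),
      coord p (u x) = (f (A x))⁻¹ * coord p (A x) := by
    intro p x
    by_cases h0 : p.2.2 = 0
    · simp [hcoord_def, h0, hu, ContinuousLinearMap.smul_apply, inner_smul_left,
        Complex.conj_ofReal, Complex.re_ofReal_mul]
      ring
    · by_cases h1' : p.2.2 = 1
      · simp [hcoord_def, h0, h1', hu, ContinuousLinearMap.smul_apply, inner_smul_left,
          Complex.conj_ofReal, Complex.re_ofReal_mul]
        ring
      · simp [hcoord_def, h0, h1', hu, ContinuousLinearMap.smul_apply, inner_smul_left,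
          Complex.conj_ofReal, Complex.im_ofReal_mul]
        ring
  -- convex weights
  set lam : Ω → Ω → ℝ := fun x y => q x y * f (A y) / ((1 - q x x) * f (A x)) with hlam
  have hcpos : ∀ x ∈ B, 0 < (1 - q x x) * f (A x) := by
    intro x hx
    have hx1 : q x x < 1 := by simpa [hB] using hx
    exact mul_pos (by linarith) (hfpos x)
  have hlamnn : ∀ x ∈ B, ∀ y, 0 ≤ lam x y := by
    intro x hx y
    exact div_nonneg (mul_nonneg (hnn x y) (hfpos y).le) (hcpos x hx).le
  -- f applied to the relation
  have hfrel : ∀ x ∈ B, (1 - q x x) * f (A x) = ∑ y ∈ B.erase x, q x y * f (A y) := by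
    intro x hx
    rw [hf]
    simp only [Finset.mul_sum]
    rw [Finset.sum_comm]
    apply Finset.sum_congr rfl
    intro a _
    have h1 := congrArg Complex.re (hopC x hx (ψ a))
    simp only [Complex.re_ofReal_mul, Complex.re_sum] at h1
    simpa [Complex.re_ofReal_mul] using h1
  have hlamsum : ∀ x ∈ B, ∑ y ∈ B.erase x, lam x y = 1 := by
    intro x hx
    rw [hlam]
    simp only
    rw [← Finset.sum_div, ← hfrel x hx]
    exact div_self (hcpos x hx).ne'
  -- convex relation for v
  have hvrel : ∀ x ∈ B, v x = ∑ y ∈ B.erase x, lam x y • v y := by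
    intro x hx
    apply le0.injective
    have hsum : le0 (∑ y ∈ B.erase x, lam x y • v y)
        = fun p => ∑ y ∈ B.erase x, lam x y * coord p (u y) := by
      rw [map_sum]
      funext p
      rw [Finset.sum_apply]
      apply Finset.sum_congr rfl
      intro y _
      rw [map_smul, Pi.smul_apply, hv_apply, smul_eq_mul]
    rw [hsum]
    funext p
    rw [hv_apply]
    rw [hcoord_u p x]
    have hstep : ∀ y ∈ B.erase x, lam x y * coord p (u y)
        = (q x y * coord p (A y)) * ((1 - q x x) * f (A x))⁻¹ := by
      intro y _
      rw [hcoord_u p y, hlam]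
      have hfy := (hfpos y).ne'
      have : q x y * f (A y) / ((1 - q x x) * f (A x)) * ((f (A y))⁻¹ * coord p (A y))
          = (q x y * coord p (A y)) * ((1 - q x x) * f (A x))⁻¹ * (f (A y) * (f (A y))⁻¹) := by
        ring
      rw [this, mul_inv_cancel₀ hfy, mul_one]
    rw [Finset.sum_congr rfl hstep, ← Finset.sum_mul, ← hcoordA x hx p]
    have hc := hcpos x hx
    have h1x : (1 : ℝ) - q x x ≠ 0 := by
      intro hz
      rw [hz, zero_mul] at hc
      exact lt_irrefl 0 hc
    rw [mul_inv]
    rw [show (1 - q x x) * coord p (A x) * ((1 - q x x)⁻¹ * (f (A x))⁻¹)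
        = coord p (A x) * (f (A x))⁻¹ * ((1 - q x x) * (1 - q x x)⁻¹) from by ring]
    rw [mul_inv_cancel₀ h1x, mul_one]
    ring
  -- pick the element of maximal norm
  obtain ⟨x₁, hx₁B, hx₁max⟩ :=
    B.exists_max_image (fun x => (⟪v x, v x⟫_ℝ)) ⟨x₀, hx₀mem⟩
  set M : ℝ := ⟪v x₁, v x₁⟫_ℝ with hM
  have hMpos : 0 < M := by
    rw [hM]
    rw [real_inner_self_eq_norm_mul_norm]
    have hvne : v x₁ ≠ 0 := by
      intro hz
      have h1 : coord (x₁, x₁, (0 : Fin 3)) (u x₁) = 0 := by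
        rw [← hv_apply x₁ (x₁, x₁, 0), hz, map_zero]
        rfl
      rw [hcoord_u] at h1
      have h2 : coord (x₁, x₁, (0 : Fin 3)) (A x₁) = Complex.re (⟪(A x₁) (ψ x₁), ψ x₁⟫_ℂ) := by
        simp [hcoord_def]
      rw [h2] at h1
      have h3 := hψ x₁
      have h4 := hfpos x₁
      have := mul_pos (inv_pos.mpr h4) h3
      linarith
    have := norm_pos_iff.mpr hvne
    positivity
  -- the maximizer's inner products with partners
  have hib : ∀ y ∈ B, (⟪v x₁, v y⟫_ℝ) ≤ M := by
    intro y hy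
    have h1 : (⟪v y, v y⟫_ℝ) ≤ M := hx₁max y hy
    nlinarith [real_inner_le_norm (v x₁) (v y),
      real_inner_self_eq_norm_mul_norm (v x₁),
      real_inner_self_eq_norm_mul_norm (v y),
      norm_nonneg (v x₁), norm_nonneg (v y)]
  have hMsum : M = ∑ y ∈ B.erase x₁, lam x₁ y * (⟪v x₁, v y⟫_ℝ) := by
    have h0 : M = ⟪v x₁, ∑ y ∈ B.erase x₁, lam x₁ y • v y⟫_ℝ := by
      rw [hM]
      exact congrArg (fun w => (⟪v x₁, w⟫_ℝ)) (hvrel x₁ hx₁B)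
    rw [h0, inner_sum]
    apply Finset.sum_congr rfl
    intro y _
    rw [real_inner_smul_right]
  -- there is a partner with positive weight
  have hyex : ∃ y ∈ B.erase x₁, 0 < lam x₁ y := by
    by_contra hno
    push_neg at hno
    have h1 : ∑ y ∈ B.erase x₁, lam x₁ y ≤ 0 :=
      Finset.sum_nonpos (fun y hy => hno y hy)
    rw [hlamsum x₁ hx₁B] at h1
    linarith
  obtain ⟨y₁, hy₁E, hy₁pos⟩ := hyex
  have hy₁B : y₁ ∈ B := Finset.mem_of_mem_erase hy₁E
  have hy₁ne : y₁ ≠ x₁ := Finset.ne_of_mem_erase hy₁E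
  -- equality in the maximum
  have hinnM : (⟪v x₁, v y₁⟫_ℝ) = M := by
    by_contra hne
    have hlt : (⟪v x₁, v y₁⟫_ℝ) < M := lt_of_le_of_ne (hib y₁ hy₁B) hne
    have h2 : ∑ y ∈ B.erase x₁, lam x₁ y * (⟪v x₁, v y⟫_ℝ)
        < ∑ y ∈ B.erase x₁, lam x₁ y * M := by
      apply Finset.sum_lt_sum
      · intro y hy
        exact mul_le_mul_of_nonneg_left (hib y (Finset.mem_of_mem_erase hy))
          (hlamnn x₁ hx₁B y)
      · exact ⟨y₁, hy₁E, mul_lt_mul_of_pos_left hlt hy₁pos⟩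
    rw [← Finset.sum_mul, hlamsum x₁ hx₁B, one_mul, ← hMsum] at h2
    exact lt_irrefl M h2
  -- hence v x₁ = v y₁
  have hveq : v x₁ = v y₁ := by
    have h1 : (⟪v y₁, v y₁⟫_ℝ) ≤ M := hx₁max y₁ hy₁B
    have h2 : (⟪v x₁ - v y₁, v x₁ - v y₁⟫_ℝ) ≤ 0 := by
      rw [inner_sub_left, inner_sub_right, inner_sub_right]
      have h3 : (⟪v y₁, v x₁⟫_ℝ) = (⟪v x₁, v y₁⟫_ℝ) := real_inner_comm _ _
      rw [h3, hinnM]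
      rw [← hM]
      linarith
    have h4 := real_inner_self_nonneg (x := v x₁ - v y₁)
    have h5 : (⟪v x₁ - v y₁, v x₁ - v y₁⟫_ℝ) = 0 := le_antisymm h2 h4
    have h6 := inner_self_eq_zero.mp h5
    exact sub_eq_zero.mp h6
  -- contradiction via the separating vector
  have hsep := hχ x₁ y₁ (hy₁ne.symm)
  apply hsep
  have hre : coord (x₁, y₁, (1 : Fin 3)) (u x₁) = coord (x₁, y₁, (1 : Fin 3)) (u y₁) := by
    rw [← hv_apply, ← hv_apply, hveq]
  have him : coord (x₁, y₁, (2 : Fin 3)) (u x₁) = coord (x₁, y₁, (2 : Fin 3)) (u y₁) := by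
    rw [← hv_apply, ← hv_apply, hveq]
  have hre' : Complex.re (⟪(u x₁) (χ x₁ y₁), χ x₁ y₁⟫_ℂ)
      = Complex.re (⟪(u y₁) (χ x₁ y₁), χ x₁ y₁⟫_ℂ) := by
    simpa [hcoord_def] using hre
  have him' : Complex.im (⟪(u x₁) (χ x₁ y₁), χ x₁ y₁⟫_ℂ)
      = Complex.im (⟪(u y₁) (χ x₁ y₁), χ x₁ y₁⟫_ℂ) := by
    simpa [hcoord_def] using him
  have heq : (⟪(u x₁) (χ x₁ y₁), χ x₁ y₁⟫_ℂ) = ⟪(u y₁) (χ x₁ y₁), χ x₁ y₁⟫_ℂ :=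
    Complex.ext hre' him'
  rw [ContinuousLinearMap.sub_apply, inner_sub_left, heq, sub_self]
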